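/- A retract of a finitely presented group is finitely presented: if there are group homomorphisms i : H → G and r : G → H with r ∘ i = id_H and G is finitely presented, then H is finitely presented. -/

import Mathlib

universe u

/-- A group is finitely presented if it is the quotient of a finitely generated free group
by the normal closure of a finite set of relations. -/
def GroupFinitelyPresented (G : Type u) [Group G] : Prop :=
  ∃ (n : ℕ) (R : Set (FreeGroup (Fin n))) (f : FreeGroup (Fin n) →* G),
    R.Finite ∧ Function.Surjective f ∧ f.ker = Subgroup.normalClosure R

/-- A retract of a finitely presented group is finitely presented: if
`i : H → G` and `r : G → H` are group homomorphisms with `r ∘ i = id_H` and `G` is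
finitely presented, then `H` is finitely presented. -/
theorem retract_of_finitelyPresented (G : Type u) (H : Type u) [Group G] [Group H]
    (i : H →* G) (r : G →* H) (hri : r.comp i = MonoidHom.id H)
    (hG : GroupFinitelyPresented G) :
    GroupFinitelyPresented H := by
  obtain ⟨n, R, f, hRfin, hfsurj, hker⟩ := hG
  have hri' : ∀ h : H, r (i h) = h := fun h =>
    DFunLike.congr_fun hri h
  have hpre : ∀ j : Fin n, ∃ w : FreeGroup (Fin n), f w = i (r (f (FreeGroup.of j))) :=
    fun j => hfsurj _
  classical
  set φ : FreeGroup (Fin n) →* FreeGroup (Fin n) :=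
    FreeGroup.lift (fun j => Classical.choose (hpre j)) with hφ
  have hφof : ∀ j : Fin n, f (φ (FreeGroup.of j)) = i (r (f (FreeGroup.of j))) := by
    intro j
    simp only [hφ, FreeGroup.lift_apply_of]
    exact Classical.choose_spec (hpre j)
  have hfφ : ∀ w, f (φ w) = i (r (f w)) := by
    intro w
    have : f.comp φ = (i.comp r).comp f := by
      apply FreeGroup.ext_hom
      intro j
      simpa using hφof j
    simpa using DFunLike.congr_fun this w
  set S : Set (FreeGroup (Fin n)) :=
    Set.range (fun j : Fin n => (FreeGroup.of j)⁻¹ * φ (FreeGroup.of j)) with hS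
  have hN : (Subgroup.normalClosure S).Normal := Subgroup.normalClosure_normal
  refine ⟨n, R ∪ S, r.comp f, hRfin.union (Set.finite_range _), ?_, ?_⟩
  · intro h
    obtain ⟨w, hw⟩ := hfsurj (i h)
    exact ⟨w, by simp [hw, hri' h]⟩
  · have hRsub : R ⊆ (f.ker : Set (FreeGroup (Fin n))) := by
      rw [hker]; exact Subgroup.subset_normalClosure
    -- key: w⁻¹ * φ w ∈ normalClosure S for all w
    have key : ∀ w : FreeGroup (Fin n), w⁻¹ * φ w ∈ Subgroup.normalClosure S := by
      intro w
      induction w using FreeGroup.induction_on with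
      | C1 => simpa using Subgroup.one_mem _
      | of j => exact Subgroup.subset_normalClosure ⟨j, rfl⟩
      | inv_of j ih =>
        have ih' : (FreeGroup.of j)⁻¹ * φ (FreeGroup.of j) ∈ Subgroup.normalClosure S := ih
        have h2 := hN.conj_mem _ (Subgroup.inv_mem _ ih') (FreeGroup.of j)
        show (FreeGroup.of j)⁻¹⁻¹ * φ ((FreeGroup.of j)⁻¹) ∈ Subgroup.normalClosure S
        rw [map_inv]
        convert h2 using 1
        group
      | mul w₁ w₂ ih1 ih2 =>
        have h1 := hN.conj_mem _ ih1 w₂⁻¹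
        have h3 := Subgroup.mul_mem _ h1 ih2
        have heq : w₂⁻¹ * (w₁⁻¹ * φ w₁) * w₂⁻¹⁻¹ * (w₂⁻¹ * φ w₂) =
            (w₁ * w₂)⁻¹ * φ (w₁ * w₂) := by
          rw [map_mul]; group
        rwa [heq] at h3
    apply le_antisymm
    · intro w hw
      have hw1 : r (f w) = 1 := hw
      have hφw : φ w ∈ f.ker := by
        rw [MonoidHom.mem_ker, hfφ, hw1, map_one]
      have hφw' : φ w ∈ Subgroup.normalClosure (R ∪ S) := by
        rw [hker] at hφw
        exact Subgroup.normalClosure_mono Set.subset_union_left hφw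
      have hwS : w⁻¹ * φ w ∈ Subgroup.normalClosure (R ∪ S) :=
        Subgroup.normalClosure_mono Set.subset_union_right (key w)
      have : φ w * (w⁻¹ * φ w)⁻¹ ∈ Subgroup.normalClosure (R ∪ S) :=
        Subgroup.mul_mem _ hφw' (Subgroup.inv_mem _ hwS)
      have heq : φ w * (w⁻¹ * φ w)⁻¹ = w := by group
      rwa [heq] at this
    · apply Subgroup.normalClosure_le_normal
      · intro w hw
        rcases hw with hw | hw
        · have : f w = 1 := hRsub hw
          simp [MonoidHom.mem_ker, this]
        · obtain ⟨j, rfl⟩ := hw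
          have : r (f ((FreeGroup.of j)⁻¹ * φ (FreeGroup.of j))) = 1 := by
            rw [map_mul, map_mul, map_inv, map_inv, hφof, hri']
            group
          simpa [MonoidHom.mem_ker] using this
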